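/- arXiv:math/0610550 — 2 statements merged into one kernel-verified Lean document; each statement's English description precedes it below -/
import Mathlib

section
/- Let P be a real symmetric n×n stochastic matrix whose largest eigenvalue 1 has eigenvector (1,…,1)/√n, and let μ denote the maximum absolute value of the other eigenvalues. Then μ/n ≤ max_{i,j} |P_{ij} − 1/n| ≤ μ. -/
open Matrix Finset

private lemma aux_eig_bound {n : ℕ} (Q : Matrix (Fin n) (Fin n) ℝ) (M ν : ℝ)
    (hM : ∀ r j, |Q r j| ≤ M) (w : Fin n → ℝ) (hw : w ≠ 0)
    (hQw : ∀ r, ∑ j, Q r j * w j = ν * w r) : |ν| ≤ n * M := by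
  obtain ⟨s, hs⟩ := Function.ne_iff.mp hw
  obtain ⟨r, -, hr⟩ := Finset.exists_max_image Finset.univ (fun r => |w r|)
    ⟨s, Finset.mem_univ s⟩
  have hwr : 0 < |w r| := lt_of_lt_of_le (abs_pos.mpr hs) (hr s (Finset.mem_univ s))
  have key : |ν| * |w r| ≤ (n * M) * |w r| := by
    calc |ν| * |w r| = |ν * w r| := (abs_mul _ _).symm
    _ = |∑ j, Q r j * w j| := by rw [hQw r]
    _ ≤ ∑ j, |Q r j * w j| := Finset.abs_sum_le_sum_abs _ _
    _ ≤ ∑ _j : Fin n, M * |w r| := by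
        refine Finset.sum_le_sum fun j _ => ?_
        rw [abs_mul]
        exact mul_le_mul (hM r j) (hr j (Finset.mem_univ j)) (abs_nonneg _)
          (le_trans (abs_nonneg _) (hM r j))
    _ = (n * M) * |w r| := by simp [Finset.sum_const, Finset.card_univ]; ring
  exact le_of_mul_le_mul_right key hwr

/-- Let `P` be a real symmetric `n×n` stochastic matrix whose largest eigenvalue `1`
    has eigenvector `(1,…,1)/√n`, and let `μ` be the maximum absolute value of the
    remaining eigenvalues.  Then `μ/n ≤ max_{i,j} |P_{ij} − 1/n| ≤ μ`. -/
theorem symmetric_stochastic_mixing_bound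
    (n : ℕ) (hn : 2 ≤ n) (P : Matrix (Fin n) (Fin n) ℝ)
    (hP : P.IsHermitian)
    (hnonneg : ∀ i j, 0 ≤ P i j)
    (hrow : ∀ i, ∑ j, P i j = 1)
    (i₀ : Fin n) (hi₀ : hP.eigenvalues i₀ = 1)
    (hmax : ∀ i, |hP.eigenvalues i| ≤ 1)
    (hvec : P.mulVec (fun _ => Real.sqrt n⁻¹) = fun _ => Real.sqrt n⁻¹)
    (μ : ℝ)
    (hμ : μ = (Finset.univ.erase i₀).sup'
      (by
        haveI : Nontrivial (Fin n) := Fin.nontrivial_iff_two_le.mpr hn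
        exact (Finset.erase_nonempty (Finset.mem_univ i₀)).2 Finset.univ_nontrivial)
      (fun i => |hP.eigenvalues i|)) :
    μ / n ≤ (Finset.univ ×ˢ Finset.univ).sup' ⟨(i₀, i₀), by simp⟩
        (fun p : Fin n × Fin n => |P p.1 p.2 - (n : ℝ)⁻¹|) ∧
    (Finset.univ ×ˢ Finset.univ).sup' ⟨(i₀, i₀), by simp⟩
        (fun p : Fin n × Fin n => |P p.1 p.2 - (n : ℝ)⁻¹|) ≤ μ := by
  haveI : Nontrivial (Fin n) := Fin.nontrivial_iff_two_le.mpr hn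
  set U : Matrix (Fin n) (Fin n) ℝ := (hP.eigenvectorUnitary : Matrix (Fin n) (Fin n) ℝ) with hU
  set L : Fin n → ℝ := hP.eigenvalues with hL
  have hUU : U * star U = 1 := Matrix.mem_unitaryGroup_iff.mp hP.eigenvectorUnitary.2
  have hUU' : star U * U = 1 := Matrix.mem_unitaryGroup_iff'.mp hP.eigenvectorUnitary.2
  have hrowo : ∀ i j, ∑ k, U i k * U j k = if i = j then (1:ℝ) else 0 := by
    intro i j
    have := congrFun (congrFun hUU i) j
    simpa [Matrix.mul_apply, Matrix.one_apply, Matrix.star_apply] using this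
  have hcolo : ∀ k l, ∑ r, U r k * U r l = if k = l then (1:ℝ) else 0 := by
    intro k l
    have := congrFun (congrFun hUU' k) l
    simpa [Matrix.mul_apply, Matrix.one_apply, Matrix.star_apply, mul_comm] using this
  have hPe : ∀ i j, P i j = ∑ k, L k * (U i k * U j k) := by
    intro i j
    conv_lhs => rw [hP.spectral_theorem]
    simp [Matrix.mul_apply, Matrix.diagonal_apply, Matrix.star_apply, Finset.sum_ite_eq,
      ite_mul, Finset.mul_sum]
    refine Finset.sum_congr rfl fun k _ => ?_
    simp only [hU, Matrix.IsHermitian.eigenvectorUnitary_apply]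
    ring
  have hn0 : (0:ℝ) < n := by positivity
  set u : Fin n → ℝ := fun _ => Real.sqrt (n:ℝ)⁻¹ with hu
  have huu : ∀ r s : Fin n, u r * u s = (n:ℝ)⁻¹ := fun r s =>
    Real.mul_self_sqrt (by positivity)
  have hsumu : ∑ j, u j * u j = 1 := by
    rw [Finset.sum_congr rfl fun j _ => huu j j]
    simp only [Finset.sum_const, Finset.card_univ, Fintype.card_fin, nsmul_eq_mul]
    field_simp
  have hvec' : ∀ r, ∑ j, P r j * u j = u r := fun r => congrFun hvec r
  have hsym : ∀ r j, P r j = P j r := by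
    intro r j
    conv_lhs => rw [← hP]
    simp [Matrix.conjTranspose_apply]
  set c : Fin n → ℝ := fun k => ∑ r, U r k * u r with hc_def
  have hPcol : ∀ r i, ∑ j, P r j * U j i = L i * U r i := by
    intro r i
    calc ∑ j, P r j * U j i = ∑ j, ∑ m, L m * (U r m * U j m) * U j i := by
          refine Finset.sum_congr rfl fun j _ => ?_
          rw [hPe r j, Finset.sum_mul]
    _ = ∑ m, L m * U r m * ∑ j, U j m * U j i := by
          rw [Finset.sum_comm]
          refine Finset.sum_congr rfl fun m _ => ?_
          rw [Finset.mul_sum]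
          exact Finset.sum_congr rfl fun j _ => by ring
    _ = L i * U r i := by
          rw [Finset.sum_eq_single i]
          · rw [hcolo i i]; simp
          · intro m _ hm; rw [hcolo m i, if_neg hm]; ring
          · intro h; exact absurd (Finset.mem_univ i) h
  have hc : ∀ k, L k * c k = c k := by
    intro k
    have : c k = L k * c k := by
      calc c k = ∑ r, U r k * ∑ j, P r j * u j := by
            refine Finset.sum_congr rfl fun r _ => by rw [hvec' r]
      _ = ∑ r, ∑ j, U r k * (P r j * u j) := by
            exact Finset.sum_congr rfl fun r _ => Finset.mul_sum _ _ _
      _ = ∑ j, ∑ r, U r k * (P r j * u j) := Finset.sum_comm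
      _ = ∑ j, (∑ r, P j r * U r k) * u j := by
            refine Finset.sum_congr rfl fun j _ => ?_
            rw [Finset.sum_mul]
            refine Finset.sum_congr rfl fun r _ => ?_
            rw [hsym r j]; ring
      _ = ∑ j, (L k * U j k) * u j := by
            refine Finset.sum_congr rfl fun j _ => by rw [hPcol j k]
      _ = L k * c k := by
            rw [hc_def, Finset.mul_sum]
            exact Finset.sum_congr rfl fun j _ => by ring
    exact this.symm
  -- key eigen-equation for the shifted matrix
  have hcol_u : ∀ k, ∑ j, u j * U j k = c k := by
    intro k
    rw [hc_def]
    exact Finset.sum_congr rfl fun j _ => mul_comm _ _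
  have hkey : ∀ k r, ∑ j, (P r j - (n:ℝ)⁻¹) * (U j k - c k * u j)
      = L k * (U r k - c k * u r) := by
    intro k r
    calc ∑ j, (P r j - (n:ℝ)⁻¹) * (U j k - c k * u j)
        = ∑ j, (P r j * U j k - c k * (P r j * u j) - u r * (u j * U j k)
            + (c k * u r) * (u j * u j)) := by
          refine Finset.sum_congr rfl fun j _ => ?_
          rw [← huu r j]; ring
    _ = (∑ j, P r j * U j k) - c k * (∑ j, P r j * u j) - u r * (∑ j, u j * U j k)
          + (c k * u r) * (∑ j, u j * u j) := by
          rw [Finset.sum_add_distrib, Finset.sum_sub_distrib, Finset.sum_sub_distrib,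
            Finset.mul_sum, Finset.mul_sum, Finset.mul_sum]
    _ = L k * U r k - c k * u r - u r * c k + (c k * u r) * 1 := by
          rw [hPcol r k, hvec' r, hcol_u k, hsumu]
    _ = L k * (U r k - c k * u r) := by linear_combination (u r) * (hc k)
  -- bound on entries by the sup'
  have hS0 : ∀ r j : Fin n, |P r j - (n:ℝ)⁻¹| ≤ (Finset.univ ×ˢ Finset.univ).sup'
      ⟨(i₀, i₀), by simp⟩ (fun p : Fin n × Fin n => |P p.1 p.2 - (n : ℝ)⁻¹|) := by
    intro r j
    have hmem : (r, j) ∈ Finset.univ ×ˢ (Finset.univ : Finset (Fin n)) := by simp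
    exact Finset.le_sup' (fun p : Fin n × Fin n => |P p.1 p.2 - (n : ℝ)⁻¹|) hmem
  set S := (Finset.univ ×ˢ Finset.univ).sup' ⟨(i₀, i₀), by simp⟩
      (fun p : Fin n × Fin n => |P p.1 p.2 - (n : ℝ)⁻¹|) with hS_def
  -- lower bound : every non-Perron eigenvalue is at most n * S in absolute value
  have hlow : ∀ i ∈ Finset.univ.erase i₀, |L i| ≤ n * S := by
    intro i hi
    have hii : i ≠ i₀ := Finset.ne_of_mem_erase hi
    by_cases hw : (fun r => U r i - c i * u r) ≠ 0
    · exact aux_eig_bound (Matrix.of fun r j => P r j - (n:ℝ)⁻¹) S (L i) hS0 _ hw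
        (fun r => hkey i r)
    · push_neg at hw
      have hUri : ∀ r, U r i = c i * u r := fun r => by
        have := congrFun hw r
        simpa [sub_eq_zero] using this
      have h1 : c i * c i = 1 := by
        have h2 := hcolo i i
        rw [if_pos rfl] at h2
        calc c i * c i = (c i * c i) * ∑ r, u r * u r := by rw [hsumu, mul_one]
        _ = ∑ r, U r i * U r i := by
            rw [Finset.mul_sum]
            exact Finset.sum_congr rfl fun r _ => by rw [hUri r]; ring
        _ = 1 := h2
      have hci : c i ≠ 0 := fun h => by rw [h] at h1; norm_num at h1
      have hLi : L i = 1 := mul_right_cancel₀ hci (by rw [hc i, one_mul])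
      have hci₀ : c i₀ = 0 := by
        have h2 : ∑ r, U r i₀ * U r i = 0 := by
          rw [hcolo i₀ i, if_neg (Ne.symm hii)]
        have h3 : c i * c i₀ = 0 := by
          rw [← h2]
          rw [hc_def, Finset.mul_sum]
          exact Finset.sum_congr rfl fun r _ => by rw [hUri r]; ring
        rcases mul_eq_zero.mp h3 with h | h
        · exact absurd h hci
        · exact h
      have hkey' : ∀ r, ∑ j, (P r j - (n:ℝ)⁻¹) * (U j i₀) = L i * U r i₀ := by
        intro r
        have h4 := hkey i₀ r
        rw [hci₀] at h4
        simp only [zero_mul, sub_zero] at h4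
        rw [h4, hLi, hi₀]
      have hw' : (fun r => U r i₀) ≠ 0 := by
        intro h
        have h5 := hcolo i₀ i₀
        rw [if_pos rfl] at h5
        have h6 : ∀ r : Fin n, U r i₀ = 0 := fun r => congrFun h r
        rw [Finset.sum_congr rfl (fun r _ => show U r i₀ * U r i₀ = (0:ℝ) by
          rw [h6 r]; ring)] at h5
        simp at h5
      exact aux_eig_bound (Matrix.of fun r j => P r j - (n:ℝ)⁻¹) S (L i) hS0 _ hw' hkey'
  constructor
  · rw [div_le_iff₀ hn0, hμ]
    refine Finset.sup'_le _ _ fun i hi => ?_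
    rw [mul_comm]
    exact hlow i hi
  · -- upper bound
    by_cases hone : ∃ k, k ≠ i₀ ∧ L k = 1
    · obtain ⟨k, hk, hLk⟩ := hone
      have hμ1 : 1 ≤ μ := by
        rw [hμ]
        have h := Finset.le_sup' (fun i => |L i|)
          (Finset.mem_erase.mpr ⟨hk, Finset.mem_univ k⟩)
        rw [hLk] at h
        rw [abs_one] at h; exact h
      refine Finset.sup'_le _ _ fun p _ => ?_
      have hP1 : P p.1 p.2 ≤ 1 := by
        rw [← hrow p.1]
        exact Finset.single_le_sum (fun j _ => hnonneg p.1 j) (Finset.mem_univ p.2)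
      have hn1 : (n:ℝ)⁻¹ ≤ 1 := by
        rw [inv_le_one_iff₀]
        right
        exact_mod_cast Nat.one_le_of_lt hn
      have hninv0 : (0:ℝ) < (n:ℝ)⁻¹ := by positivity
      refine le_trans (abs_le.mpr ⟨by have := hnonneg p.1 p.2; linarith, by linarith⟩) hμ1
    · push_neg at hone
      have hck0 : ∀ k, k ≠ i₀ → c k = 0 := by
        intro k hk
        by_contra h
        exact hone k hk (mul_right_cancel₀ h (by rw [hc k, one_mul]))
      have hcsum : ∑ k, c k * c k = 1 := by
        calc ∑ k, c k * c k = ∑ k, ∑ r, ∑ s, (U r k * u r) * (U s k * u s) := by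
              refine Finset.sum_congr rfl fun k _ => ?_
              rw [hc_def]
              rw [Finset.sum_mul_sum]
        _ = ∑ r, ∑ s, ∑ k, (U r k * u r) * (U s k * u s) := by
              rw [Finset.sum_comm]
              exact Finset.sum_congr rfl fun r _ => Finset.sum_comm
        _ = ∑ r, ∑ s, (u r * u s) * ∑ k, U r k * U s k := by
              refine Finset.sum_congr rfl fun r _ => Finset.sum_congr rfl fun s _ => ?_
              rw [Finset.mul_sum]
              exact Finset.sum_congr rfl fun k _ => by ring
        _ = ∑ r, u r * u r := by
              refine Finset.sum_congr rfl fun r _ => ?_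
              rw [Finset.sum_eq_single r]
              · rw [hrowo r r, if_pos rfl, mul_one]
              · intro s _ hs; rw [hrowo r s, if_neg (Ne.symm hs), mul_zero]
              · intro h; exact absurd (Finset.mem_univ r) h
        _ = 1 := hsumu
      have hci₀ : c i₀ * c i₀ = 1 := by
        rw [← hcsum]
        symm
        refine Finset.sum_eq_single i₀ (fun k _ hk => by rw [hck0 k hk, mul_zero]) ?_
        intro h; exact absurd (Finset.mem_univ i₀) h
      have hur : ∀ r, u r = U r i₀ * c i₀ := by
        intro r
        have h5 : ∑ k, U r k * c k = u r := by
          calc ∑ k, U r k * c k = ∑ k, ∑ s, U r k * (U s k * u s) := by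
                refine Finset.sum_congr rfl fun k _ => ?_
                rw [hc_def, Finset.mul_sum]
          _ = ∑ s, (∑ k, U r k * U s k) * u s := by
                rw [Finset.sum_comm]
                refine Finset.sum_congr rfl fun s _ => ?_
                rw [Finset.sum_mul]
                exact Finset.sum_congr rfl fun k _ => by ring
          _ = u r := by
                rw [Finset.sum_eq_single r]
                · rw [hrowo r r, if_pos rfl, one_mul]
                · intro s _ hs; rw [hrowo r s, if_neg (Ne.symm hs), zero_mul]
                · intro h; exact absurd (Finset.mem_univ r) h
        rw [← h5]
        refine Finset.sum_eq_single i₀ (fun k _ hk => by rw [hck0 k hk, mul_zero]) ?_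
        intro h; exact absurd (Finset.mem_univ i₀) h
      have hinv : ∀ i j : Fin n, (n:ℝ)⁻¹ = U i i₀ * U j i₀ := by
        intro i j
        calc (n:ℝ)⁻¹ = u i * u j := (huu i j).symm
        _ = (U i i₀ * c i₀) * (U j i₀ * c i₀) := congrArg₂ (· * ·) (hur i) (hur j)
        _ = (U i i₀ * U j i₀) * (c i₀ * c i₀) := by ring
        _ = U i i₀ * U j i₀ := by rw [hci₀, mul_one]
      have hμ0 : 0 ≤ μ := by
        obtain ⟨k, hk⟩ := exists_ne i₀
        rw [hμ]
        exact le_trans (abs_nonneg (L k)) (Finset.le_sup' (fun i => |L i|)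
          (Finset.mem_erase.mpr ⟨hk, Finset.mem_univ k⟩))
      have hμk : ∀ k, k ≠ i₀ → |L k| ≤ μ := fun k hk => by
        rw [hμ]
        exact Finset.le_sup' (fun i => |L i|) (Finset.mem_erase.mpr ⟨hk, Finset.mem_univ k⟩)
      refine Finset.sup'_le _ _ fun p _ => ?_
      obtain ⟨i, j⟩ := p
      simp only
      have hQ : P i j - (n:ℝ)⁻¹ = ∑ k ∈ Finset.univ.erase i₀, L k * (U i k * U j k) := by
        rw [hPe i j, hinv i j, ← Finset.add_sum_erase _ _ (Finset.mem_univ i₀)]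
        rw [hi₀]
        ring
      rw [hQ]
      have h8 : ∀ a : Fin n, ∑ k, |U a k|^2 = 1 := by
        intro a
        have h8' : ∑ k, |U a k|^2 = ∑ k, U a k * U a k :=
          Finset.sum_congr rfl fun k _ => by rw [sq_abs]; ring
        rw [h8']
        have h8'' := hrowo a a
        rw [if_pos rfl] at h8''
        exact h8''
      have hCS : ∑ k ∈ Finset.univ.erase i₀, |U i k| * |U j k| ≤ 1 := by
        have h6 : ∑ k ∈ Finset.univ.erase i₀, |U i k| * |U j k| ≤ ∑ k, |U i k| * |U j k| :=
          Finset.sum_le_sum_of_subset_of_nonneg (Finset.subset_univ _)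
            (fun k _ _ => mul_nonneg (abs_nonneg _) (abs_nonneg _))
        have h7 : (∑ k, |U i k| * |U j k|)^2 ≤ (∑ k, |U i k|^2) * (∑ k, |U j k|^2) :=
          Finset.sum_mul_sq_le_sq_mul_sq _ _ _
        rw [h8 i, h8 j, mul_one] at h7
        have h9 : (0:ℝ) ≤ ∑ k, |U i k| * |U j k| :=
          Finset.sum_nonneg fun k _ => mul_nonneg (abs_nonneg _) (abs_nonneg _)
        nlinarith
      calc |∑ k ∈ Finset.univ.erase i₀, L k * (U i k * U j k)|
          ≤ ∑ k ∈ Finset.univ.erase i₀, |L k| * (|U i k| * |U j k|) := by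
            refine le_trans (Finset.abs_sum_le_sum_abs _ _) ?_
            refine Finset.sum_le_sum fun k _ => ?_
            rw [abs_mul, abs_mul]
      _ ≤ ∑ k ∈ Finset.univ.erase i₀, μ * (|U i k| * |U j k|) :=
            Finset.sum_le_sum fun k hk => mul_le_mul_of_nonneg_right
              (hμk k (Finset.ne_of_mem_erase hk))
              (mul_nonneg (abs_nonneg _) (abs_nonneg _))
      _ = μ * ∑ k ∈ Finset.univ.erase i₀, |U i k| * |U j k| := (Finset.mul_sum _ _ _).symm
      _ ≤ μ * 1 := mul_le_mul_of_nonneg_left hCS hμ0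
      _ = μ := mul_one μ
end

section
/- Let d ≥ 3 and 2√(d−1) < λ ≤ d. Then (λ + √(λ² − 4(d−1)))/(2(d−1)) > λ/(2(d−1)) and (λ + √(λ² − 4(d−1)))/(2(d−1)) ≤ λ/d; hence the ratio of the non-backtracking mixing rate ψ(λ/(2√(d−1)))/√(d−1) to the simple random walk mixing rate λ/d lies in (d/(2(d−1)), 1]. -/
/-- `ψ(x) = x + √(x²−1)` for `x ≥ 1`, and `ψ(x) = 1` for `x ≤ 1`. -/
noncomputable def psi (x : ℝ) : ℝ :=
  if 1 ≤ x then x + Real.sqrt (x ^ 2 - 1) else 1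

/-- For `d ≥ 3` and `2√(d−1) < λ ≤ d`:
    `λ/(2(d−1)) < (λ + √(λ²−4(d−1)))/(2(d−1)) ≤ λ/d`, the non-backtracking mixing
    rate `ψ(λ/(2√(d−1)))/√(d−1)` equals `(λ + √(λ²−4(d−1)))/(2(d−1))`, and hence the
    ratio of the non-backtracking mixing rate to the simple random walk mixing rate
    `λ/d` lies in `(d/(2(d−1)), 1]`. -/
theorem mixing_rate_ratio (d : ℕ) (hd : 3 ≤ d) (lam : ℝ)
    (h1 : 2 * Real.sqrt ((d : ℝ) - 1) < lam) (h2 : lam ≤ d) :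
    lam / (2 * ((d : ℝ) - 1))
        < (lam + Real.sqrt (lam ^ 2 - 4 * ((d : ℝ) - 1))) / (2 * ((d : ℝ) - 1)) ∧
    (lam + Real.sqrt (lam ^ 2 - 4 * ((d : ℝ) - 1))) / (2 * ((d : ℝ) - 1)) ≤ lam / d ∧
    psi (lam / (2 * Real.sqrt ((d : ℝ) - 1))) / Real.sqrt ((d : ℝ) - 1)
        = (lam + Real.sqrt (lam ^ 2 - 4 * ((d : ℝ) - 1))) / (2 * ((d : ℝ) - 1)) ∧
    (d : ℝ) / (2 * ((d : ℝ) - 1))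
        < (psi (lam / (2 * Real.sqrt ((d : ℝ) - 1))) / Real.sqrt ((d : ℝ) - 1))
            / (lam / d) ∧
    (psi (lam / (2 * Real.sqrt ((d : ℝ) - 1))) / Real.sqrt ((d : ℝ) - 1))
        / (lam / d) ≤ 1 := by
  have hd3 : (3 : ℝ) ≤ (d : ℝ) := by exact_mod_cast hd
  have hdm : (2 : ℝ) ≤ (d : ℝ) - 1 := by linarith
  have hdm0 : (0 : ℝ) < (d : ℝ) - 1 := by linarith
  have hd0 : (0 : ℝ) < (d : ℝ) := by linarith
  set s := Real.sqrt ((d : ℝ) - 1) with hs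
  have hs0 : 0 < s := Real.sqrt_pos.mpr hdm0
  have hs2 : s ^ 2 = (d : ℝ) - 1 := Real.sq_sqrt hdm0.le
  have hlam0 : 0 < lam := lt_trans (by positivity) h1
  have hdisc : 0 < lam ^ 2 - 4 * ((d : ℝ) - 1) := by
    have : (2 * s) ^ 2 < lam ^ 2 := by
      apply pow_lt_pow_left₀ h1 (by positivity) (by norm_num)
    nlinarith
  set R := Real.sqrt (lam ^ 2 - 4 * ((d : ℝ) - 1)) with hR
  have hR0 : 0 < R := Real.sqrt_pos.mpr hdisc
  have hR2 : R ^ 2 = lam ^ 2 - 4 * ((d : ℝ) - 1) := Real.sq_sqrt hdisc.le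
  clear_value s R
  have hc1 : lam / (2 * ((d : ℝ) - 1)) < (lam + R) / (2 * ((d : ℝ) - 1)) := by
    rw [div_lt_div_iff₀ (by positivity) (by positivity)]
    nlinarith
  -- dR ≤ (d-2)λ
  have hkey : (d : ℝ) * R ≤ ((d : ℝ) - 2) * lam := by
    have hsq : ((d : ℝ) * R) ^ 2 ≤ (((d : ℝ) - 2) * lam) ^ 2 := by
      have hl2 : lam ^ 2 ≤ (d : ℝ) ^ 2 := by nlinarith
      nlinarith
    have h2' : 0 ≤ ((d : ℝ) - 2) * lam := by
      apply mul_nonneg (by linarith) hlam0.le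
    nlinarith
  have hc2 : (lam + R) / (2 * ((d : ℝ) - 1)) ≤ lam / d := by
    rw [div_le_div_iff₀ (by positivity) hd0]
    nlinarith
  have hc3 : psi (lam / (2 * s)) / s = (lam + R) / (2 * ((d : ℝ) - 1)) := by
    have hx : 1 ≤ lam / (2 * s) := by
      rw [le_div_iff₀ (by positivity)]
      linarith
    rw [psi, if_pos hx]
    have hxsq : (lam / (2 * s)) ^ 2 - 1 = (lam ^ 2 - 4 * ((d : ℝ) - 1)) / (2 * s) ^ 2 := by
      field_simp
      nlinarith
    rw [hxsq, Real.sqrt_div hdisc.le, Real.sqrt_sq (by positivity), ← hR]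
    rw [← add_div, div_div, mul_assoc, ← hs2]
    ring
  refine ⟨hc1, hc2, hc3, ?_, ?_⟩
  · rw [hc3]
    have heq : (lam + R) / (2 * ((d : ℝ) - 1)) / (lam / d)
        = (lam + R) * d / (2 * ((d : ℝ) - 1) * lam) := by
      field_simp
    rw [heq, div_lt_div_iff₀ (by positivity) (by positivity)]
    have hexp : (lam + R) * (d : ℝ) * (2 * ((d : ℝ) - 1))
        = (d : ℝ) * (2 * ((d : ℝ) - 1) * lam) + 2 * ((d : ℝ) - 1) * (d : ℝ) * R := by
      ring
    have hpos : 0 < 2 * ((d : ℝ) - 1) * (d : ℝ) * R := by positivity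
    linarith
  · rw [hc3]
    rw [div_le_one (by positivity)]
    exact hc2
end
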